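/- Let δ > 0 and define b : ℝ → ℝ by b(r) = |r| (log₊ |r|)^δ, where log₊ z := log(max(z, e)). Then for α, β > 0 the quantity T(α, β) := ∫_α^∞ ds / (β² + 2∫_α^s b(r) dr)^{1/2} is finite if and only if δ > 2. -/

import Mathlib

open MeasureTheory Set Filter Topology
open scoped ENNReal

private lemma aux_integrableOn (p : ℝ) (hp : 1 < p) :
    IntegrableOn (fun x : ℝ => (x * Real.log x ^ p)⁻¹) (Set.Ioi (Real.exp 1)) := by
  have h0 : ∀ x ∈ Set.Ici (Real.exp 1),
      HasDerivAt (fun x : ℝ => (1 - p)⁻¹ * Real.log x ^ (1 - p))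
        ((x * Real.log x ^ p)⁻¹) x := by
    intro x hx
    have hxpos : (0:ℝ) < x := lt_of_lt_of_le (Real.exp_pos 1) hx
    have hlog : (1:ℝ) ≤ Real.log x := by
      have := Real.log_le_log (Real.exp_pos 1) hx
      rwa [Real.log_exp] at this
    have hlogpos : (0:ℝ) < Real.log x := lt_of_lt_of_le one_pos hlog
    have h1 : HasDerivAt Real.log x⁻¹ x := Real.hasDerivAt_log (ne_of_gt hxpos)
    have h2 : HasDerivAt (fun y : ℝ => y ^ (1 - p))
        ((1 - p) * Real.log x ^ (1 - p - 1)) (Real.log x) :=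
      Real.hasDerivAt_rpow_const (Or.inl (ne_of_gt hlogpos))
    have h3 := (h2.comp x h1).const_mul ((1 - p)⁻¹)
    convert h3 using 1
    case e'_4 => rfl
    case e'_5 => rfl
    case e'_8 => rfl
    have hne : (1 : ℝ) - p ≠ 0 := by intro h; nlinarith
    rw [Real.rpow_sub hlogpos, Real.rpow_sub hlogpos, Real.rpow_one]
    field_simp
  have hnn : ∀ x ∈ Set.Ioi (Real.exp 1), (0:ℝ) ≤ (x * Real.log x ^ p)⁻¹ := by
    intro x hx
    have hxpos : (0:ℝ) < x := lt_trans (Real.exp_pos 1) hx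
    have hlg : (0:ℝ) ≤ Real.log x := by
      have := Real.log_le_log (Real.exp_pos 1) hx.le
      rw [Real.log_exp] at this; linarith
    positivity
  have htend : Tendsto (fun x : ℝ => (1 - p)⁻¹ * Real.log x ^ (1 - p)) atTop (𝓝 0) := by
    have h1 : Tendsto (fun y : ℝ => y ^ (-(p - 1))) atTop (𝓝 0) :=
      tendsto_rpow_neg_atTop (by linarith)
    have h2 : Tendsto (fun x : ℝ => Real.log x ^ (-(p-1))) atTop (𝓝 0) :=
      h1.comp Real.tendsto_log_atTop
    have := h2.const_mul ((1 - p)⁻¹)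
    rw [mul_zero] at this
    convert this using 2
    ring_nf
  exact integrableOn_Ioi_deriv_of_nonneg' h0 hnn htend

private lemma aux_lintegral_top (a : ℝ) (ha : Real.exp 1 ≤ a) :
    ∫⁻ x in Set.Ioi a, ENNReal.ofReal ((x * Real.log x)⁻¹) = ⊤ := by
  by_contra h
  have hmeas : Measurable (fun x : ℝ => (x * Real.log x)⁻¹) :=
    (measurable_id.mul Real.measurable_log).inv
  have hnn : ∀ x ∈ Set.Ioi a, (0:ℝ) ≤ (x * Real.log x)⁻¹ := by
    intro x hx
    have hxpos : (0:ℝ) < x := lt_of_le_of_lt (Real.exp_pos 1).le (lt_of_le_of_lt ha hx)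
    have : (0:ℝ) ≤ Real.log x := by
      have := Real.log_le_log (Real.exp_pos 1) (le_of_lt (lt_of_le_of_lt ha hx))
      rw [Real.log_exp] at this; linarith
    positivity
  have hint : IntegrableOn (fun x : ℝ => (x * Real.log x)⁻¹) (Set.Ioi a) := by
    refine ⟨hmeas.aestronglyMeasurable, ?_⟩
    rw [hasFiniteIntegral_iff_ofReal]
    · exact lt_top_iff_ne_top.2 h
    · exact (ae_restrict_iff' measurableSet_Ioi).2 (ae_of_all _ hnn)
  have hderiv : ∀ x ∈ Set.Ioi a, HasDerivAt (fun x : ℝ => Real.log (Real.log x))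
      ((x * Real.log x)⁻¹) x := by
    intro x hx
    have hxpos : (0:ℝ) < x := lt_of_le_of_lt (Real.exp_pos 1).le (lt_of_le_of_lt ha hx)
    have hlog : (1:ℝ) ≤ Real.log x := by
      have := Real.log_le_log (Real.exp_pos 1) (le_of_lt (lt_of_le_of_lt ha hx))
      rwa [Real.log_exp] at this
    have h1 : HasDerivAt Real.log x⁻¹ x := Real.hasDerivAt_log (ne_of_gt hxpos)
    have h2 : HasDerivAt Real.log (Real.log x)⁻¹ (Real.log x) :=
      Real.hasDerivAt_log (by positivity)
    have := h2.comp x h1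
    convert this using 1
    case e'_4 => rfl
    case e'_5 => rfl
    case e'_8 => rfl
    rw [mul_inv]
    ring
  have hT := tendsto_limUnder_of_hasDerivAt_of_integrableOn_Ioi hderiv hint
  have hTop : Tendsto (fun x : ℝ => Real.log (Real.log x)) atTop atTop :=
    Real.tendsto_log_atTop.comp Real.tendsto_log_atTop
  exact not_tendsto_nhds_of_tendsto_atTop hTop _ hT

/-- `T(α,β) = ∫_α^∞ ds / (β² + 2∫_α^s b(r) dr)^{1/2}`, valued in `[0,∞]`
(with the convention `1/0 = ∞`, which is irrelevant here since the integrand's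
denominator is positive when `β > 0`). -/
noncomputable def blowupTime (b : ℝ → ℝ) (α β : ℝ) : ENNReal :=
  ∫⁻ s in Set.Ioi α, ENNReal.ofReal (1 / Real.sqrt (β ^ 2 + 2 * ∫ r in α..s, b r))

set_option maxHeartbeats 2000000 in
/-- For `b(r) = |r| (log₊ |r|)^δ` with `log₊ z = log (max z e)`, the quantity
`T(α,β)` is finite if and only if `δ > 2`. -/
theorem blowupTime_log_power_finite_iff (δ : ℝ) (hδ : 0 < δ)
    (α β : ℝ) (hα : 0 < α) (hβ : 0 < β) :
    blowupTime (fun r => |r| * Real.log (max |r| (Real.exp 1)) ^ δ) α β < ⊤ ↔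
      2 < δ := by
  set b : ℝ → ℝ := fun r => |r| * Real.log (max |r| (Real.exp 1)) ^ δ with hbdef
  have hlog1 : ∀ r : ℝ, 1 ≤ Real.log (max |r| (Real.exp 1)) := by
    intro r
    have h := Real.log_le_log (Real.exp_pos 1) (le_max_right |r| (Real.exp 1))
    rwa [Real.log_exp] at h
  have hbnn : ∀ r, 0 ≤ b r := fun r =>
    mul_nonneg (abs_nonneg r) (Real.rpow_nonneg (le_trans zero_le_one (hlog1 r)) δ)
  have hbcont : Continuous b := by
    have hmax : Continuous fun r : ℝ => max |r| (Real.exp 1) :=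
      continuous_abs.max continuous_const
    have hlogc : Continuous fun r : ℝ => Real.log (max |r| (Real.exp 1)) :=
      hmax.log (fun x => ne_of_gt (lt_of_lt_of_le (Real.exp_pos 1) (le_max_right _ _)))
    exact continuous_abs.mul (hlogc.rpow_const (fun x => Or.inr hδ.le))
  have hbint : ∀ u v : ℝ, IntervalIntegrable b volume u v := fun u v =>
    hbcont.intervalIntegrable u v
  have hInn : ∀ s, α ≤ s → 0 ≤ ∫ r in α..s, b r := fun s hs =>
    intervalIntegral.integral_nonneg hs (fun u _ => hbnn u)
  constructor
  · -- finiteness → 2 < δ, by contradiction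
    intro hfin
    by_contra hle
    push_neg at hle
    set s₀ : ℝ := max α (Real.exp 1) with hs₀
    have hαs₀ : α ≤ s₀ := le_max_left _ _
    have hes₀ : Real.exp 1 ≤ s₀ := le_max_right _ _
    set c : ℝ := (Real.sqrt (β ^ 2 + 2))⁻¹ with hc
    have hcpos : 0 < c := by positivity
    have key : ∀ s ∈ Set.Ioi s₀,
        ENNReal.ofReal (c * (s * Real.log s)⁻¹)
          ≤ ENNReal.ofReal (1 / Real.sqrt (β ^ 2 + 2 * ∫ r in α..s, b r)) := by
      intro s hs
      have hse : Real.exp 1 < s := lt_of_le_of_lt hes₀ hs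
      have hs0 : (0:ℝ) < s := lt_trans (Real.exp_pos 1) hse
      have hs1 : (1:ℝ) < s := by nlinarith [Real.add_one_le_exp (1:ℝ)]
      have hLs : (1:ℝ) ≤ Real.log s := by
        have := Real.log_le_log (Real.exp_pos 1) hse.le
        rwa [Real.log_exp] at this
      have hαs : α < s := lt_of_le_of_lt hαs₀ hs
      have hI : (∫ r in α..s, b r) ≤ s * (s * Real.log s ^ δ) := by
        have hpt : ∀ r ∈ Set.Icc α s, b r ≤ s * Real.log s ^ δ := by
          intro r hr
          have hr0 : (0:ℝ) ≤ r := le_trans hα.le hr.1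
          have h1 : |r| ≤ s := by rw [abs_of_nonneg hr0]; exact hr.2
          have h2 : Real.log (max |r| (Real.exp 1)) ≤ Real.log s :=
            Real.log_le_log (lt_of_lt_of_le (Real.exp_pos 1) (le_max_right |r| _))
              (max_le h1 hse.le)
          have h3 : (0:ℝ) ≤ Real.log (max |r| (Real.exp 1)) :=
            le_trans zero_le_one (hlog1 r)
          exact mul_le_mul h1 (Real.rpow_le_rpow h3 h2 hδ.le)
            (Real.rpow_nonneg h3 δ) hs0.le
        have hm := intervalIntegral.integral_mono_on hαs.le (hbint α s)
          (intervalIntegrable_const) hpt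
        rw [intervalIntegral.integral_const, smul_eq_mul] at hm
        refine le_trans hm ?_
        have h4 : s - α ≤ s := by linarith
        have h5 : (0:ℝ) ≤ s * Real.log s ^ δ :=
          mul_nonneg hs0.le (Real.rpow_nonneg (by linarith) δ)
        exact mul_le_mul_of_nonneg_right h4 h5
      have hIle : β ^ 2 + 2 * (∫ r in α..s, b r) ≤ (β ^ 2 + 2) * (s * Real.log s) ^ 2 := by
        have hLd : Real.log s ^ δ ≤ Real.log s ^ (2:ℝ) :=
          Real.rpow_le_rpow_of_exponent_le hLs hle
        have hL2 : Real.log s ^ (2:ℝ) = Real.log s ^ (2:ℕ) := by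
          rw [← Real.rpow_natCast (Real.log s) 2]; norm_num
        rw [hL2] at hLd
        have hsl1 : (1:ℝ) ≤ s * Real.log s := one_le_mul_of_one_le_of_one_le hs1.le hLs
        have hb2 : β ^ 2 ≤ β ^ 2 * (s * Real.log s) ^ 2 := by
          nlinarith [sq_nonneg β, mul_le_mul hsl1 hsl1 zero_le_one (by linarith : (0:ℝ) ≤ s * Real.log s)]
        have h2I : 2 * (∫ r in α..s, b r) ≤ 2 * (s * Real.log s) ^ 2 := by
          have h6 : s * (s * Real.log s ^ δ) ≤ (s * Real.log s) ^ 2 := by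
            have := mul_le_mul_of_nonneg_left hLd (mul_nonneg hs0.le hs0.le)
            nlinarith
          linarith
        nlinarith
      have hsq : Real.sqrt (β ^ 2 + 2 * ∫ r in α..s, b r)
          ≤ Real.sqrt (β ^ 2 + 2) * (s * Real.log s) := by
        have h7 := Real.sqrt_le_sqrt hIle
        rwa [Real.sqrt_mul (by positivity) _,
          Real.sqrt_sq (by positivity)] at h7
      have hpos : 0 < Real.sqrt (β ^ 2 + 2 * ∫ r in α..s, b r) := by
        apply Real.sqrt_pos.2
        have := hInn s hαs.le
        nlinarith
      apply ENNReal.ofReal_le_ofReal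
      rw [one_div]
      calc c * (s * Real.log s)⁻¹ = (Real.sqrt (β ^ 2 + 2) * (s * Real.log s))⁻¹ := by
            rw [hc]; exact (mul_inv _ _).symm
        _ ≤ (Real.sqrt (β ^ 2 + 2 * ∫ r in α..s, b r))⁻¹ := inv_anti₀ hpos hsq
    have htop : blowupTime b α β = ⊤ := by
      rw [eq_top_iff, blowupTime]
      calc (⊤:ℝ≥0∞) = ∫⁻ s in Set.Ioi s₀, ENNReal.ofReal (c * (s * Real.log s)⁻¹) := by
            simp_rw [ENNReal.ofReal_mul hcpos.le]
            rw [lintegral_const_mul' _ _ ENNReal.ofReal_ne_top,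
              aux_lintegral_top s₀ hes₀,
              ENNReal.mul_top (by simp [ENNReal.ofReal_eq_zero]; linarith)]
        _ ≤ ∫⁻ s in Set.Ioi s₀,
              ENNReal.ofReal (1 / Real.sqrt (β ^ 2 + 2 * ∫ r in α..s, b r)) :=
            lintegral_mono_ae ((ae_restrict_iff' measurableSet_Ioi).2 (ae_of_all _ key))
        _ ≤ _ := lintegral_mono_set (Set.Ioi_subset_Ioi hαs₀)
    exact absurd htop hfin.ne
  · intro h2δ
    set p : ℝ := δ / 2 with hpdef
    have hp : 1 < p := by rw [hpdef]; linarith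
    set s₀ : ℝ := α ^ 2 + α + Real.exp 2 with hs₀def
    have hαs₀ : α ≤ s₀ := by nlinarith [Real.exp_pos 2, sq_nonneg α]
    have hes₀ : Real.exp 1 ≤ s₀ := by
      have h1 : Real.exp 1 ≤ Real.exp 2 := Real.exp_le_exp.2 (by norm_num)
      nlinarith [sq_nonneg α]
    set C : ℝ := Real.sqrt (2 * 2 ^ δ) with hCdef
    have h2δpos : (0:ℝ) < 2 * (2:ℝ) ^ δ := by positivity
    have hCpos : 0 < C := Real.sqrt_pos.2 h2δpos
    have key : ∀ s ∈ Set.Ioi s₀,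
        ENNReal.ofReal (1 / Real.sqrt (β ^ 2 + 2 * ∫ r in α..s, b r))
          ≤ ENNReal.ofReal (C * (s * Real.log s ^ p)⁻¹) := by
      intro s hs
      have hs₀lt : α ^ 2 + α + Real.exp 2 < s := by
        have h := hs
        rw [Set.mem_Ioi, hs₀def] at h
        exact h
      have hsexp2 : Real.exp 2 < s := by nlinarith [sq_nonneg α]
      have hs0 : (0:ℝ) < s := lt_trans (Real.exp_pos 2) hsexp2
      have hs2 : (2:ℝ) ≤ s := by nlinarith [Real.add_one_le_exp (2:ℝ)]
      have hs1 : (1:ℝ) ≤ s := by linarith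
      have hsqle : Real.sqrt s ≤ s := by
        have h8 : Real.sqrt s ≤ Real.sqrt (s ^ 2) := Real.sqrt_le_sqrt (by nlinarith)
        rwa [Real.sqrt_sq hs0.le] at h8
      have hαsqrt : α ≤ Real.sqrt s := by
        rw [Real.le_sqrt hα.le hs0.le]
        nlinarith [Real.exp_pos 2]
      have hesqrt : Real.exp 1 ≤ Real.sqrt s := by
        rw [Real.le_sqrt (Real.exp_pos 1).le hs0.le]
        have h9 : Real.exp 1 ^ 2 = Real.exp 2 := by
          rw [sq, ← Real.exp_add]; norm_num
        rw [h9]; linarith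
      have hαs : α < s := lt_of_le_of_lt hαs₀ hs
      have hLs : (1:ℝ) ≤ Real.log s := by
        have := Real.log_le_log (Real.exp_pos 1) (le_trans hes₀ (le_of_lt hs))
        rwa [Real.log_exp] at this
      have hhalf : (0:ℝ) ≤ Real.log s / 2 := by linarith
      have hIlow : (Real.log s / 2) ^ δ * (s ^ 2 / 4) ≤ ∫ r in α..s, b r := by
        have hsplit : (∫ r in α..s, b r)
            = (∫ r in α..(Real.sqrt s), b r) + ∫ r in (Real.sqrt s)..s, b r :=
          (intervalIntegral.integral_add_adjacent_intervals (hbint _ _) (hbint _ _)).symm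
        have h1 : 0 ≤ ∫ r in α..(Real.sqrt s), b r :=
          intervalIntegral.integral_nonneg hαsqrt (fun u _ => hbnn u)
        have h2 : (∫ r in (Real.sqrt s)..s, (Real.log s / 2) ^ δ * r)
            ≤ ∫ r in (Real.sqrt s)..s, b r := by
          apply intervalIntegral.integral_mono_on hsqle
            ((continuous_const.mul continuous_id).intervalIntegrable _ _) (hbint _ _)
          intro r hr
          have hr0 : (0:ℝ) < r := lt_of_lt_of_le (lt_of_lt_of_le (Real.exp_pos 1) hesqrt) hr.1
          have hlogr : Real.log s / 2 ≤ Real.log (max |r| (Real.exp 1)) := by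
            rw [← Real.log_sqrt hs0.le]
            apply Real.log_le_log (Real.sqrt_pos.2 hs0)
            rw [abs_of_nonneg hr0.le]
            exact le_trans hr.1 (le_max_left _ _)
          calc (Real.log s / 2) ^ δ * r
              ≤ Real.log (max |r| (Real.exp 1)) ^ δ * r :=
                mul_le_mul_of_nonneg_right (Real.rpow_le_rpow hhalf hlogr hδ.le) hr0.le
            _ = b r := by rw [hbdef]; dsimp only; rw [abs_of_nonneg hr0.le]; ring
        rw [intervalIntegral.integral_const_mul, integral_id,
          Real.sq_sqrt hs0.le] at h2
        have h3 : s ^ 2 / 4 ≤ (s ^ 2 - s) / 2 := by nlinarith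
        have h4 : (Real.log s / 2) ^ δ * (s ^ 2 / 4)
            ≤ (Real.log s / 2) ^ δ * ((s ^ 2 - s) / 2) :=
          mul_le_mul_of_nonneg_left h3 (Real.rpow_nonneg hhalf δ)
        rw [hsplit]
        linarith
      have hIlow2 : s ^ 2 * Real.log s ^ δ / (2 * 2 ^ δ)
          ≤ β ^ 2 + 2 * ∫ r in α..s, b r := by
        have hdiv : (Real.log s / 2) ^ δ = Real.log s ^ δ / 2 ^ δ :=
          Real.div_rpow (by linarith) (by norm_num) δ
        rw [hdiv] at hIlow
        have h2d0 : (0:ℝ) < (2:ℝ) ^ δ := by positivity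
        have heq : 2 * (Real.log s ^ δ / 2 ^ δ * (s ^ 2 / 4))
            = s ^ 2 * Real.log s ^ δ / (2 * 2 ^ δ) := by
          field_simp
          ring
        nlinarith [sq_nonneg β]
      have hsqrtlow : s * Real.log s ^ p / C
          ≤ Real.sqrt (β ^ 2 + 2 * ∫ r in α..s, b r) := by
        have hLp0 : (0:ℝ) ≤ Real.log s := by linarith
        have hdenom : (0:ℝ) ≤ s * Real.log s ^ p / C := by positivity
        have hynn : (0:ℝ) ≤ β ^ 2 + 2 * ∫ r in α..s, b r := by
          have := hInn s hαs.le
          nlinarith [sq_nonneg β]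
        have hpp : Real.log s ^ p * Real.log s ^ p = Real.log s ^ δ := by
          rw [← Real.rpow_add (by linarith : (0:ℝ) < Real.log s)]
          congr 1
          rw [hpdef]; ring
        have hsq : (s * Real.log s ^ p / C) ^ 2
            = s ^ 2 * Real.log s ^ δ / (2 * 2 ^ δ) := by
          rw [hCdef, div_pow, mul_pow, Real.sq_sqrt h2δpos.le,
            pow_two (Real.log s ^ p), hpp]
        rw [Real.le_sqrt hdenom hynn, hsq]
        exact hIlow2
      have hLpos : (0:ℝ) < Real.log s ^ p :=
        Real.rpow_pos_of_pos (by linarith) p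
      have hpos2 : (0:ℝ) < s * Real.log s ^ p / C :=
        div_pos (mul_pos hs0 hLpos) hCpos
      apply ENNReal.ofReal_le_ofReal
      rw [one_div]
      calc (Real.sqrt (β ^ 2 + 2 * ∫ r in α..s, b r))⁻¹
          ≤ (s * Real.log s ^ p / C)⁻¹ := inv_anti₀ hpos2 hsqrtlow
        _ = C * (s * Real.log s ^ p)⁻¹ := by
            rw [inv_div, div_eq_mul_inv]
    have hsplit : blowupTime b α β
        ≤ (∫⁻ s in Set.Ioc α s₀,
            ENNReal.ofReal (1 / Real.sqrt (β ^ 2 + 2 * ∫ r in α..s, b r)))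
          + ∫⁻ s in Set.Ioi s₀,
            ENNReal.ofReal (1 / Real.sqrt (β ^ 2 + 2 * ∫ r in α..s, b r)) := by
      rw [blowupTime, ← Set.Ioc_union_Ioi_eq_Ioi hαs₀]
      exact lintegral_union_le _ _ _
    have hfin1 : (∫⁻ s in Set.Ioc α s₀,
        ENNReal.ofReal (1 / Real.sqrt (β ^ 2 + 2 * ∫ r in α..s, b r))) < ⊤ := by
      calc (∫⁻ s in Set.Ioc α s₀,
            ENNReal.ofReal (1 / Real.sqrt (β ^ 2 + 2 * ∫ r in α..s, b r)))
          ≤ ∫⁻ _ in Set.Ioc α s₀, ENNReal.ofReal (1 / β) := by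
            apply lintegral_mono_ae ((ae_restrict_iff' measurableSet_Ioc).2 (ae_of_all _ ?_))
            intro s hs
            apply ENNReal.ofReal_le_ofReal
            apply one_div_le_one_div_of_le hβ
            have h0 : 0 ≤ ∫ r in α..s, b r := hInn s hs.1.le
            calc β = Real.sqrt (β ^ 2) := (Real.sqrt_sq hβ.le).symm
              _ ≤ _ := Real.sqrt_le_sqrt (by linarith)
        _ = ENNReal.ofReal (1 / β) * volume (Set.Ioc α s₀) := setLIntegral_const _ _
        _ < ⊤ := ENNReal.mul_lt_top ENNReal.ofReal_lt_top measure_Ioc_lt_top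
    have hfin2 : (∫⁻ s in Set.Ioi s₀,
        ENNReal.ofReal (1 / Real.sqrt (β ^ 2 + 2 * ∫ r in α..s, b r))) < ⊤ := by
      calc (∫⁻ s in Set.Ioi s₀,
            ENNReal.ofReal (1 / Real.sqrt (β ^ 2 + 2 * ∫ r in α..s, b r)))
          ≤ ∫⁻ s in Set.Ioi s₀, ENNReal.ofReal (C * (s * Real.log s ^ p)⁻¹) :=
            lintegral_mono_ae ((ae_restrict_iff' measurableSet_Ioi).2 (ae_of_all _ key))
        _ = ENNReal.ofReal C
              * ∫⁻ s in Set.Ioi s₀, ENNReal.ofReal ((s * Real.log s ^ p)⁻¹) := by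
            simp_rw [ENNReal.ofReal_mul hCpos.le]
            exact lintegral_const_mul' _ _ ENNReal.ofReal_ne_top
        _ < ⊤ := by
            apply ENNReal.mul_lt_top ENNReal.ofReal_lt_top
            have hint : IntegrableOn (fun x : ℝ => (x * Real.log x ^ p)⁻¹) (Set.Ioi s₀) :=
              (aux_integrableOn p hp).mono_set (Set.Ioi_subset_Ioi hes₀)
            exact hint.lintegral_lt_top
    exact lt_of_le_of_lt hsplit (ENNReal.add_lt_top.2 ⟨hfin1, hfin2⟩)
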